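/- Let G : 2^{V∪V̄} → ℝ be submodular with G(∅) = 0 and min_{T⊆V̄} G(T) = 0. Define F(S) = min_{T⊆V̄} G(S∪T) for S ⊆ V. Then for all x ∈ ℝ^N with non-negative entries, the Lovász extension f of F satisfies f(x) = min_{x̄ ∈ ℝ^M_{≥0}} g(x, x̄), where g is the Lovász extension of G and (x, x̄) denotes the concatenated vector on V∪V̄ with |V| = N, |V̄| = M. -/

import Mathlib

open scoped Classical
open MeasureTheory

/-- The Lovász extension of a set function `F` (with `F ∅ = 0`), defined equivalently to the
sorted telescoping sum via the level-set integral formula. -/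
noncomputable def lovasz {α : Type*} [Fintype α] (F : Set α → ℝ) (x : α → ℝ) : ℝ :=
  (⨅ i, x i) * F Set.univ +
    ∫ t in Set.Ioc (⨅ i, x i) (⨆ i, x i), F {i | t < x i}

/-- `F(S₁) + F(S₂) ≥ F(S₁ ∪ S₂) + F(S₁ ∩ S₂)`. -/
def Submodular {α : Type*} (F : Set α → ℝ) : Prop :=
  ∀ A B : Set α, F (A ∪ B) + F (A ∩ B) ≤ F A + F B

section Aux

lemma level_meas {γ : Type*} [Fintype γ] (F : Set γ → ℝ) (x : γ → ℝ) :
    Measurable fun t => F {i | t < x i} := by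
  have h : (fun t => F {i | t < x i})
      = fun t => ∑ S : Set γ, Set.indicator {u : ℝ | ∀ i, i ∈ S ↔ u < x i} (fun _ => F S) t := by
    funext t
    rw [Finset.sum_eq_single ({i | t < x i} : Set γ)]
    · rw [Set.indicator_of_mem]
      intro i; simp
    · intro S _ hS
      rw [Set.indicator_of_notMem]
      intro hmem
      exact hS (by ext i; simp [hmem i])
    · simp
  rw [h]
  refine Finset.measurable_sum _ fun S _ => Measurable.indicator measurable_const ?_
  have : {u : ℝ | ∀ i, i ∈ S ↔ u < x i} = ⋂ i, {u : ℝ | i ∈ S ↔ u < x i} := by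
    ext u; simp
  rw [this]
  refine MeasurableSet.iInter fun i => ?_
  by_cases hi : i ∈ S
  · simp only [hi, true_iff]; exact measurableSet_Iio
  · simp only [hi, false_iff]
    have : {u : ℝ | ¬ u < x i} = Set.Ici (x i) := by ext u; simp
    rw [this]; exact measurableSet_Ici

lemma level_intOn {γ : Type*} [Fintype γ] (F : Set γ → ℝ) (x : γ → ℝ) (a b : ℝ) :
    IntegrableOn (fun t => F {i | t < x i}) (Set.Ioc a b) := by
  refine Integrable.mono' (g := fun _ => ∑ S : Set γ, |F S|)
    (integrableOn_const measure_Ioc_lt_top.ne)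
    ((level_meas F x).aestronglyMeasurable) ?_
  filter_upwards with t
  exact Finset.single_le_sum (f := fun S : Set γ => |F S|) (fun _ _ => abs_nonneg _)
    (Finset.mem_univ _)

lemma lovasz_eq_integral {γ : Type*} [Fintype γ] (F : Set γ → ℝ) (hF0 : F ∅ = 0)
    (x : γ → ℝ) (hx : ∀ i, 0 ≤ x i) (C : ℝ) (hC : ∀ i, x i ≤ C) (hC0 : 0 ≤ C) :
    lovasz F x = ∫ t in Set.Ioc 0 C, F {i | t < x i} := by
  rcases isEmpty_or_nonempty γ with hγ | hγ
  · have h1 : (⨅ i, x i) = 0 := Real.iInf_of_isEmpty _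
    have h2 : (⨆ i, x i) = 0 := Real.iSup_of_isEmpty _
    simp only [lovasz, h1, h2, zero_mul, zero_add]
    rw [Set.Ioc_self]
    simp only [Measure.restrict_empty, integral_zero_measure]
    have : ∀ t : ℝ, F {i | t < x i} = 0 := by
      intro t
      have : ({i | t < x i} : Set γ) = ∅ := Set.eq_empty_of_isEmpty _
      rw [this, hF0]
    simp [this]
  · set a := ⨅ i, x i with ha
    set b := ⨆ i, x i with hb
    have hbdd : BddBelow (Set.range x) := (Set.finite_range x).bddBelow
    have hbdd' : BddAbove (Set.range x) := (Set.finite_range x).bddAbove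
    have ha0 : 0 ≤ a := le_ciInf hx
    have hab : a ≤ b := (ciInf_le hbdd (Classical.arbitrary γ)).trans (le_ciSup hbdd' _)
    have hbC : b ≤ C := ciSup_le hC
    have hax : ∀ i, a ≤ x i := fun i => ciInf_le hbdd i
    have hxb : ∀ i, x i ≤ b := fun i => le_ciSup hbdd' i
    have hsplit1 : Set.Ioc (0:ℝ) C = Set.Ioc 0 a ∪ Set.Ioc a C :=
      (Set.Ioc_union_Ioc_eq_Ioc ha0 (hab.trans hbC)).symm
    have hsplit2 : Set.Ioc a C = Set.Ioc a b ∪ Set.Ioc b C :=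
      (Set.Ioc_union_Ioc_eq_Ioc hab hbC).symm
    have hdisj : ∀ (u v w : ℝ), Disjoint (Set.Ioc u v) (Set.Ioc v w) := by
      intro u v w
      rw [Set.disjoint_left]
      rintro t ⟨_, h1⟩ ⟨h2, _⟩
      exact absurd h1 (not_le.2 h2)
    rw [hsplit1, setIntegral_union (hdisj _ _ _) measurableSet_Ioc (level_intOn F x _ _)
        (by rw [hsplit2]; exact (level_intOn F x _ _).union (level_intOn F x _ _)),
      hsplit2, setIntegral_union (hdisj _ _ _) measurableSet_Ioc (level_intOn F x _ _)
        (level_intOn F x _ _)]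
    have e1 : ∫ t in Set.Ioc 0 a, F {i | t < x i} = a * F Set.univ := by
      rw [integral_Ioc_eq_integral_Ioo]
      rw [setIntegral_congr_fun measurableSet_Ioo (g := fun _ => F Set.univ)
        (fun t ht => by
          congr 1
          ext i; simp only [Set.mem_setOf_eq, Set.mem_univ, iff_true]
          exact lt_of_lt_of_le ht.2 (hax i))]
      simp [Real.volume_Ioo, ENNReal.toReal_ofReal ha0, mul_comm, ha0]
    have e3 : ∫ t in Set.Ioc b C, F {i | t < x i} = 0 := by
      rw [setIntegral_congr_fun measurableSet_Ioc (g := fun _ => (0:ℝ))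
        (fun t ht => by
          have : ({i | t < x i} : Set γ) = ∅ := by
            ext i; simp only [Set.mem_setOf_eq, Set.mem_empty_iff_false, iff_false, not_lt]
            exact (hxb i).trans ht.1.le
          rw [this, hF0])]
      simp
    rw [e1, e3, lovasz]
    ring

section Sum
variable {α β : Type*}

lemma jU (S S' : Set α) (T T' : Set β) :
    (Sum.inl '' S ∪ Sum.inr '' T) ∪ (Sum.inl '' S' ∪ Sum.inr '' T')
      = Sum.inl '' (S ∪ S') ∪ Sum.inr '' (T ∪ T') := by
  ext z; cases z <;> simp

lemma jI (S S' : Set α) (T T' : Set β) :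
    (Sum.inl '' S ∪ Sum.inr '' T) ∩ (Sum.inl '' S' ∪ Sum.inr '' T')
      = Sum.inl '' (S ∩ S') ∪ Sum.inr '' (T ∩ T') := by
  ext z; cases z <;> simp

lemma level_elim (x : α → ℝ) (xb : β → ℝ) (t : ℝ) :
    {z : α ⊕ β | t < Sum.elim x xb z} = Sum.inl '' {i | t < x i} ∪ Sum.inr '' {j | t < xb j} := by
  ext z; cases z <;> simp

variable [Fintype α] [Fintype β] (G : Set (α ⊕ β) → ℝ)

noncomputable def Fm (S : Set α) : ℝ := ⨅ T : Set β, G (Sum.inl '' S ∪ Sum.inr '' T)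

omit [Fintype α] in
lemma hbddG (S : Set α) :
    BddBelow (Set.range fun T : Set β => G (Sum.inl '' S ∪ Sum.inr '' T)) :=
  (Set.finite_range _).bddBelow

omit [Fintype α] in
lemma Fm_le (S : Set α) (T : Set β) : Fm G S ≤ G (Sum.inl '' S ∪ Sum.inr '' T) :=
  ciInf_le (hbddG G S) T

omit [Fintype α] in
lemma Fm_attained (S : Set α) : ∃ T : Set β, G (Sum.inl '' S ∪ Sum.inr '' T) = Fm G S := by
  obtain ⟨T, hT⟩ := Finite.exists_min fun T : Set β => G (Sum.inl '' S ∪ Sum.inr '' T)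
  exact ⟨T, le_antisymm ((Fm_le G S T)) (le_ciInf hT) |>.symm ▸ rfl⟩

noncomputable def Tstar (S : Set α) : Set β :=
  ⋃₀ {T : Set β | G (Sum.inl '' S ∪ Sum.inr '' T) = Fm G S}

variable {G}

omit [Fintype α] in
lemma union_min (hG : Submodular G) {S : Set α} {T T' : Set β}
    (h : G (Sum.inl '' S ∪ Sum.inr '' T) = Fm G S)
    (h' : G (Sum.inl '' S ∪ Sum.inr '' T') = Fm G S) :
    G (Sum.inl '' S ∪ Sum.inr '' (T ∪ T')) = Fm G S := by
  have hs := hG (Sum.inl '' S ∪ Sum.inr '' T) (Sum.inl '' S ∪ Sum.inr '' T')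
  rw [jU, jI, Set.union_self, Set.inter_self] at hs
  have h1 := Fm_le G S (T ∪ T')
  have h2 := Fm_le G S (T ∩ T')
  linarith

omit [Fintype α] in
lemma Tstar_min (hG : Submodular G) (S : Set α) :
    G (Sum.inl '' S ∪ Sum.inr '' (Tstar G S)) = Fm G S := by
  classical
  set M := {T : Set β | G (Sum.inl '' S ∪ Sum.inr '' T) = Fm G S} with hM
  have hfin : M.Finite := Set.toFinite M
  have hne : M.Nonempty := Fm_attained G S
  have key : ∀ 𝒯 : Set (Set β), 𝒯.Finite → 𝒯 ⊆ M → 𝒯.Nonempty → ⋃₀ 𝒯 ∈ M := by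
    intro 𝒯 h𝒯
    refine Set.Finite.induction_on (motive := fun 𝒯 _ => 𝒯 ⊆ M → 𝒯.Nonempty → ⋃₀ 𝒯 ∈ M) 𝒯 h𝒯 ?_ ?_
    · intro _ h; exact absurd h Set.not_nonempty_empty
    · intro a s _ _ ih hsub _
      rw [Set.sUnion_insert]
      rcases s.eq_empty_or_nonempty with rfl | hs
      · rw [Set.sUnion_empty, Set.union_empty]
        exact hsub (Set.mem_insert _ _)
      · exact union_min hG (hsub (Set.mem_insert _ _))
          (ih (fun T hT => hsub (Set.mem_insert_of_mem _ hT)) hs)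
  exact key M hfin (le_refl M) hne

omit [Fintype α] in
lemma Tstar_mono (hG : Submodular G) {S S' : Set α} (hSS : S ⊆ S') :
    Tstar G S ⊆ Tstar G S' := by
  have hs := hG (Sum.inl '' S ∪ Sum.inr '' (Tstar G S)) (Sum.inl '' S' ∪ Sum.inr '' (Tstar G S'))
  rw [jU, jI, Set.union_eq_right.2 hSS, Set.inter_eq_left.2 hSS] at hs
  have h1 := Fm_le G S' (Tstar G S ∪ Tstar G S')
  have h2 := Fm_le G S (Tstar G S ∩ Tstar G S')
  have hA := Tstar_min hG S
  have hB := Tstar_min hG S'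
  have hmem : Tstar G S ∪ Tstar G S' ∈
      {T : Set β | G (Sum.inl '' S' ∪ Sum.inr '' T) = Fm G S'} := by
    simp only [Set.mem_setOf_eq]; linarith
  exact (Set.subset_union_left).trans (Set.subset_sUnion_of_mem hmem)

end Sum

end Aux

/-- If `G` is submodular, `G ∅ = 0` and `min_{T ⊆ V̄} G(T) = 0`, then the Lovász extension of
`F(S) = min_{T ⊆ V̄} G(S ∪ T)` satisfies `f(x) = min_{x̄ ≥ 0} g(x, x̄)` for all `x ≥ 0`. -/
theorem stmt_7 {α β : Type*} [Fintype α] [Fintype β] (G : Set (α ⊕ β) → ℝ)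
    (hG : Submodular G) (hG0 : G ∅ = 0)
    (hmin : (⨅ T : Set β, G (Sum.inr '' T)) = 0)
    (x : α → ℝ) (hx : ∀ i, 0 ≤ x i) :
    lovasz (fun S : Set α => ⨅ T : Set β, G (Sum.inl '' S ∪ Sum.inr '' T)) x
      = ⨅ xb : {xb : β → ℝ // ∀ j, 0 ≤ xb j}, lovasz G (Sum.elim x xb.1) := by
  classical
  have hFm : (fun S : Set α => ⨅ T : Set β, G (Sum.inl '' S ∪ Sum.inr '' T)) = Fm G := rfl
  rw [hFm]
  have hF0 : Fm G ∅ = 0 := by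
    rw [show Fm G ∅ = ⨅ T : Set β, G (Sum.inl '' (∅ : Set α) ∪ Sum.inr '' T) from rfl]
    simp only [Set.image_empty, Set.empty_union]
    exact hmin
  -- Part 1 : lower bound
  have part1 : ∀ xb : β → ℝ, (∀ j, 0 ≤ xb j) →
      lovasz (Fm G) x ≤ lovasz G (Sum.elim x xb) := by
    intro xb hxb
    set C : ℝ := (∑ i, x i) + (∑ j, xb j) with hCdef
    have hsx : 0 ≤ ∑ i, x i := Finset.sum_nonneg fun i _ => hx i
    have hsxb : 0 ≤ ∑ j, xb j := Finset.sum_nonneg fun j _ => hxb j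
    have hC0 : 0 ≤ C := by rw [hCdef]; linarith
    have hCx : ∀ i, x i ≤ C := fun i => by
      have := Finset.single_le_sum (f := x) (fun i _ => hx i) (Finset.mem_univ i)
      rw [hCdef]; linarith
    have hCxb : ∀ j, xb j ≤ C := fun j => by
      have := Finset.single_le_sum (f := xb) (fun j _ => hxb j) (Finset.mem_univ j)
      rw [hCdef]; linarith
    have hxe : ∀ z : α ⊕ β, 0 ≤ Sum.elim x xb z := by rintro (i|j); exacts [hx i, hxb j]
    have hCe : ∀ z : α ⊕ β, Sum.elim x xb z ≤ C := by rintro (i|j); exacts [hCx i, hCxb j]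
    rw [lovasz_eq_integral (Fm G) hF0 x hx C hCx hC0,
        lovasz_eq_integral G hG0 (Sum.elim x xb) hxe C hCe hC0]
    refine setIntegral_mono_on (level_intOn (Fm G) x 0 C)
      (level_intOn G (Sum.elim x xb) 0 C) measurableSet_Ioc ?_
    intro t _
    rw [level_elim]
    exact Fm_le G _ _
  -- Part 2 : the optimal xb
  set S : ℝ → Set α := fun t => {i | t < x i} with hSdef
  set C : ℝ := ∑ i, x i with hCdef
  have hC0 : 0 ≤ C := Finset.sum_nonneg fun i _ => hx i
  have hCx : ∀ i, x i ≤ C :=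
    fun i => Finset.single_le_sum (f := x) (fun i _ => hx i) (Finset.mem_univ i)
  set xb : β → ℝ := fun j => sSup {t | t ∈ Set.Ioc (0:ℝ) C ∧ j ∈ Tstar G (S t)} with hxbdef
  have hbddA : ∀ j : β, BddAbove {t | t ∈ Set.Ioc (0:ℝ) C ∧ j ∈ Tstar G (S t)} :=
    fun j => ⟨C, fun t ht => ht.1.2⟩
  have hxb0 : ∀ j, 0 ≤ xb j := fun j => Real.sSup_nonneg (fun t ht => le_of_lt ht.1.1)
  have hxbC : ∀ j, xb j ≤ C := fun j => Real.sSup_le (fun t ht => ht.1.2) hC0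
  have hdc : ∀ {t t' : ℝ} {j : β}, t ≤ t' → j ∈ Tstar G (S t') → j ∈ Tstar G (S t) := by
    intro t t' j htt hj
    exact Tstar_mono hG (fun i hi => lt_of_le_of_lt htt hi) hj
  have key : ∀ t ∈ Set.Ioc (0:ℝ) C, t ≠ C → {j | t < xb j} = Tstar G (S t) := by
    intro t ht htC
    ext j
    simp only [Set.mem_setOf_eq]
    constructor
    · intro hlt
      by_contra hj
      have hle : xb j ≤ t := by
        refine Real.sSup_le (fun s hs => ?_) ht.1.le
        by_contra hst
        push_neg at hst
        exact hj (hdc hst.le hs.2)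
      linarith
    · intro hj
      have htC' : t < C := lt_of_le_of_ne ht.2 htC
      set D : Finset ℝ := insert C ((Finset.univ.image x).filter (fun y => t < y)) with hDdef
      have hDne : D.Nonempty := ⟨C, Finset.mem_insert_self _ _⟩
      set t' := D.min' hDne with ht'def
      have ht'mem := D.min'_mem hDne
      have ht'gt : t < t' := by
        rcases Finset.mem_insert.1 ht'mem with h | h
        · rw [ht'def] at *; rw [h]; exact htC'
        · exact (Finset.mem_filter.1 h).2
      have ht'C : t' ≤ C := Finset.min'_le _ _ (Finset.mem_insert_self _ _)
      set t'' := (t + t') / 2 with ht''def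
      have h1 : t < t'' := by rw [ht''def]; linarith
      have h2 : t'' < t' := by rw [ht''def]; linarith
      have hSeq : S t'' = S t := by
        ext i
        simp only [hSdef, Set.mem_setOf_eq]
        constructor
        · intro h; linarith
        · intro h
          have hxD : x i ∈ D := Finset.mem_insert_of_mem
            (Finset.mem_filter.2 ⟨Finset.mem_image_of_mem x (Finset.mem_univ i), h⟩)
          have := Finset.min'_le D _ hxD
          linarith
      have hmem : t'' ∈ {s | s ∈ Set.Ioc (0:ℝ) C ∧ j ∈ Tstar G (S s)} :=
        ⟨⟨lt_trans ht.1 h1, le_trans h2.le ht'C⟩, by rw [hSeq]; exact hj⟩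
      exact lt_of_lt_of_le h1 (le_csSup (hbddA j) hmem)
  have hxe : ∀ z : α ⊕ β, 0 ≤ Sum.elim x xb z := by rintro (i|j); exacts [hx i, hxb0 j]
  have hCe : ∀ z : α ⊕ β, Sum.elim x xb z ≤ C := by rintro (i|j); exacts [hCx i, hxbC j]
  have part2 : lovasz G (Sum.elim x xb) = lovasz (Fm G) x := by
    rw [lovasz_eq_integral G hG0 (Sum.elim x xb) hxe C hCe hC0,
        lovasz_eq_integral (Fm G) hF0 x hx C hCx hC0]
    refine setIntegral_congr_ae measurableSet_Ioc ?_
    have hae : ∀ᵐ t : ℝ, t ≠ C := by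
      rw [ae_iff]
      have : {t : ℝ | ¬ t ≠ C} = {C} := by ext t; simp
      rw [this]
      exact Real.volume_singleton
    filter_upwards [hae] with t htC htI
    rw [level_elim, key t htI htC]
    exact Tstar_min hG (S t)
  -- conclusion
  haveI : Nonempty {xb : β → ℝ // ∀ j, 0 ≤ xb j} := ⟨⟨fun _ => 0, fun _ => le_rfl⟩⟩
  refine le_antisymm (le_ciInf fun p => part1 p.1 p.2) ?_
  have hbdd : BddBelow (Set.range fun p : {xb : β → ℝ // ∀ j, 0 ≤ xb j} =>
      lovasz G (Sum.elim x p.1)) := ⟨lovasz (Fm G) x, by rintro y ⟨p, rfl⟩; exact part1 p.1 p.2⟩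
  exact (ciInf_le hbdd ⟨xb, hxb0⟩).trans part2.le
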